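/- Let S, P_1, P_2 be unital complex algebras, let ω be a linear functional on S, σ_1, σ_2 linear functionals on P_1, P_2, and Θ_1, Θ_2 unital algebra automorphisms of S⊗P_1 and S⊗P_2, with extensions Θ̂_1, Θ̂_2 to S⊗P_1⊗P_2 (Θ̂_1 acting on factors one and two, Θ̂_2 on factors one and three). Then for all C ∈ S, O_1 ∈ P_1 and O_2 ∈ P_2: (ω⊗σ_1⊗σ_2)((Θ̂_1 ∘ Θ̂_2)(C⊗O_1⊗O_2)) = I_2(I_1(ω))(C), where for i = 1,2 the (unnormalized) selective update map is defined by I_i(φ)(C) := (φ⊗σ_i)(Θ_i(C⊗O_i)). In particular, taking O_1 = 1 and O_2 = 1, the combined non-selective update equals the composition of the individual non-selective updates. -/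

import Mathlib

open scoped TensorProduct

noncomputable section

variable {S PA PB : Type*} [Ring S] [Algebra ℂ S]
  [Ring PA] [Algebra ℂ PA] [Ring PB] [Algebra ℂ PB]

/-- The tensor product `ω ⊗ σ` of two linear functionals, determined by
`(ω ⊗ σ)(a ⊗ b) = ω a * σ b`. -/
def tensorFunctional {A B : Type*} [Ring A] [Algebra ℂ A]
    [Ring B] [Algebra ℂ B] (ω : A →ₗ[ℂ] ℂ) (σ : B →ₗ[ℂ] ℂ) :
    A ⊗[ℂ] B →ₗ[ℂ] ℂ :=
  (TensorProduct.lid ℂ ℂ).toLinearMap.comp (TensorProduct.map ω σ)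

/-- The partial trace `id_S ⊗ σ : S ⊗ P →ₗ S`, determined by `a ⊗ b ↦ σ(b) • a`. -/
def idTensorFunctional (S : Type*) [Ring S] [Algebra ℂ S] {P : Type*}
    [Ring P] [Algebra ℂ P] (σ : P →ₗ[ℂ] ℂ) : S ⊗[ℂ] P →ₗ[ℂ] S :=
  (TensorProduct.rid ℂ S).toLinearMap.comp (TensorProduct.map LinearMap.id σ)

/-- The rearrangement isomorphism `(S ⊗ P_A) ⊗ P_B ≃ (S ⊗ P_B) ⊗ P_A`
exchanging the two probe factors. -/
def probeSwap (S PA PB : Type*) [Ring S] [Algebra ℂ S]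
    [Ring PA] [Algebra ℂ PA] [Ring PB] [Algebra ℂ PB] :
    ((S ⊗[ℂ] PA) ⊗[ℂ] PB) ≃ₐ[ℂ] ((S ⊗[ℂ] PB) ⊗[ℂ] PA) :=
  (Algebra.TensorProduct.assoc ℂ ℂ ℂ S PA PB).trans
    ((Algebra.TensorProduct.congr AlgEquiv.refl
        (Algebra.TensorProduct.comm ℂ PA PB)).trans
      (Algebra.TensorProduct.assoc ℂ ℂ ℂ S PB PA).symm)

/-- The extension `Θ̂_A` of an automorphism `Θ_A` of `S ⊗ P_A` to
`(S ⊗ P_A) ⊗ P_B`, acting trivially on `P_B`. -/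
def hatA (ΘA : (S ⊗[ℂ] PA) ≃ₐ[ℂ] (S ⊗[ℂ] PA)) :
    ((S ⊗[ℂ] PA) ⊗[ℂ] PB) ≃ₐ[ℂ] ((S ⊗[ℂ] PA) ⊗[ℂ] PB) :=
  Algebra.TensorProduct.congr ΘA AlgEquiv.refl

/-- The extension `Θ̂_B` of an automorphism `Θ_B` of `S ⊗ P_B` to
`(S ⊗ P_A) ⊗ P_B`, acting on the first and third tensor factors and trivially
on `P_A`. -/
def hatB (ΘB : (S ⊗[ℂ] PB) ≃ₐ[ℂ] (S ⊗[ℂ] PB)) :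
    ((S ⊗[ℂ] PA) ⊗[ℂ] PB) ≃ₐ[ℂ] ((S ⊗[ℂ] PA) ⊗[ℂ] PB) :=
  (probeSwap S PA PB).trans ((Algebra.TensorProduct.congr ΘB AlgEquiv.refl).trans
    (probeSwap S PA PB).symm)

/-- The induced system observable `ε(O) = (id_S ⊗ σ)(Θ (1 ⊗ O))` of a probe
observable `O`. -/
def inducedObservable {P : Type*} [Ring P] [Algebra ℂ P] (σ : P →ₗ[ℂ] ℂ)
    (Θ : (S ⊗[ℂ] P) ≃ₐ[ℂ] (S ⊗[ℂ] P)) (O : P) : S :=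
  idTensorFunctional S σ (Θ ((1 : S) ⊗ₜ[ℂ] O))

/-- The (unnormalised) selective state-update map
`I(φ) : C ↦ (φ ⊗ σ)(Θ (C ⊗ O))` of a probe with observable `O`. -/
def selUpdate {P : Type*} [Ring P] [Algebra ℂ P] (σ : P →ₗ[ℂ] ℂ)
    (Θ : (S ⊗[ℂ] P) ≃ₐ[ℂ] (S ⊗[ℂ] P)) (O : P) (φ : S →ₗ[ℂ] ℂ) : S →ₗ[ℂ] ℂ :=
  (tensorFunctional φ σ).comp (Θ.toLinearMap.comp ((TensorProduct.mk ℂ S P).flip O))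

lemma key_aux (ω : S →ₗ[ℂ] ℂ) (σ1 : PA →ₗ[ℂ] ℂ) (σ2 : PB →ₗ[ℂ] ℂ)
    (Θ1 : (S ⊗[ℂ] PA) ≃ₐ[ℂ] (S ⊗[ℂ] PA)) (O1 : PA) (x : S ⊗[ℂ] PB) :
    tensorFunctional (tensorFunctional ω σ1) σ2
      ((hatA Θ1) ((probeSwap S PA PB).symm (x ⊗ₜ[ℂ] O1)))
    = tensorFunctional (selUpdate σ1 Θ1 O1 ω) σ2 x := by
  induction x using TensorProduct.induction_on with
  | zero => simp
  | tmul a b =>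
    simp [probeSwap, hatA, tensorFunctional, selUpdate,
      Algebra.TensorProduct.assoc_tmul, Algebra.TensorProduct.assoc_symm_tmul,
      Algebra.TensorProduct.comm_tmul, mul_comm]
  | add y z hy hz =>
    simp only [TensorProduct.add_tmul, map_add, hy, hz]

/-- The combined (selective or, for `O_1 = O_2 = 1`, non-selective) state
update of two causally ordered measurements is the composition of the
individual update maps:
`(ω ⊗ σ_1 ⊗ σ_2)((Θ̂_1 ∘ Θ̂_2)(C ⊗ O_1 ⊗ O_2)) = I_2(I_1(ω))(C)`. -/
theorem combined_update_eq_composition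
    (ω : S →ₗ[ℂ] ℂ) (σ1 : PA →ₗ[ℂ] ℂ) (σ2 : PB →ₗ[ℂ] ℂ)
    (Θ1 : (S ⊗[ℂ] PA) ≃ₐ[ℂ] (S ⊗[ℂ] PA)) (Θ2 : (S ⊗[ℂ] PB) ≃ₐ[ℂ] (S ⊗[ℂ] PB)) :
    ∀ (C : S) (O1 : PA) (O2 : PB),
    tensorFunctional (tensorFunctional ω σ1) σ2
      ((hatA Θ1) ((hatB Θ2) ((C ⊗ₜ[ℂ] O1) ⊗ₜ[ℂ] O2)))
    = selUpdate σ2 Θ2 O2 (selUpdate σ1 Θ1 O1 ω) C := by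
  intro C O1 O2
  have hswap : (probeSwap S PA PB) ((C ⊗ₜ[ℂ] O1) ⊗ₜ[ℂ] O2)
      = (C ⊗ₜ[ℂ] O2) ⊗ₜ[ℂ] O1 := by
    simp [probeSwap]
  have h2 : (hatB (PA := PA) Θ2) ((C ⊗ₜ[ℂ] O1) ⊗ₜ[ℂ] O2)
      = (probeSwap S PA PB).symm ((Θ2 (C ⊗ₜ[ℂ] O2)) ⊗ₜ[ℂ] O1) := by
    rw [hatB, AlgEquiv.trans_apply, AlgEquiv.trans_apply, hswap]
    rfl
  rw [h2, key_aux]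
  rfl

end
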